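/- Let T = 4I be four times the 2×2 identity matrix and D = { (0,0)ᵀ, (1,1)ᵀ, (2,2)ᵀ, (3,3)ᵀ, (2,1)ᵀ, (1,2)ᵀ, (0,3)ᵀ, (3,0)ᵀ } ⊂ ℤ². Then the attractor F(T,D) is connected. -/

import Mathlib

/-- The canonical cast of an integer vector to a real vector. -/
def castVec {k : ℕ} (d : Fin k → ℤ) : Fin k → ℝ := fun i => (d i : ℝ)

namespace Stmt15Aux

/-- The contraction associated to a digit. -/
noncomputable def fmap (d : Fin 2 → ℤ) (x : Fin 2 → ℝ) : Fin 2 → ℝ := (4 : ℝ)⁻¹ • (x + castVec d)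

/-- One ε-step inside `F`. -/
def RelF (F : Set (Fin 2 → ℝ)) (ε : ℝ) (a b : Fin 2 → ℝ) : Prop :=
  a ∈ F ∧ b ∈ F ∧ dist a b ≤ ε

/-- ε-chains inside `F`. -/
def ChainF (F : Set (Fin 2 → ℝ)) (ε : ℝ) : (Fin 2 → ℝ) → (Fin 2 → ℝ) → Prop :=
  Relation.ReflTransGen (RelF F ε)

lemma relF_symm (F : Set (Fin 2 → ℝ)) (ε : ℝ) : Symmetric (RelF F ε) := by
  rintro a b ⟨ha, hb, hd⟩; exact ⟨hb, ha, by rwa [dist_comm]⟩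

lemma chainF_symm {F : Set (Fin 2 → ℝ)} {ε : ℝ} {a b : Fin 2 → ℝ}
    (h : ChainF F ε a b) : ChainF F ε b a :=
  by
    haveI : Std.Symm (RelF F ε) := ⟨fun a b hab => relF_symm F ε hab⟩
    exact Relation.ReflTransGen.symmetric.symm _ _ h

lemma chainF_mono {F : Set (Fin 2 → ℝ)} {ε ε' : ℝ} (hεε' : ε ≤ ε') {a b : Fin 2 → ℝ}
    (h : ChainF F ε a b) : ChainF F ε' a b := by
  induction h with
  | refl => exact Relation.ReflTransGen.refl
  | tail _ hr ih => exact ih.tail ⟨hr.1, hr.2.1, hr.2.2.trans hεε'⟩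

lemma fmap_sub (d : Fin 2 → ℤ) (u v : Fin 2 → ℝ) :
    fmap d u - fmap d v = (4 : ℝ)⁻¹ • (u - v) := by
  simp [fmap, smul_sub]

lemma dist_fmap (d : Fin 2 → ℤ) (u v : Fin 2 → ℝ) :
    dist (fmap d u) (fmap d v) = (4 : ℝ)⁻¹ * dist u v := by
  rw [dist_eq_norm, fmap_sub, norm_smul, dist_eq_norm]
  norm_num

lemma chainF_map {F : Set (Fin 2 → ℝ)} {ε : ℝ} {d : Fin 2 → ℤ}
    (hsub : ∀ z ∈ F, fmap d z ∈ F) {a b : Fin 2 → ℝ}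
    (h : ChainF F ε a b) : ChainF F ((4 : ℝ)⁻¹ * ε) (fmap d a) (fmap d b) := by
  induction h with
  | refl => exact Relation.ReflTransGen.refl
  | tail _ hr ih =>
      refine ih.tail ⟨hsub _ hr.1, hsub _ hr.2.1, ?_⟩
      rw [dist_fmap]
      have : (0:ℝ) ≤ (4:ℝ)⁻¹ := by norm_num
      nlinarith [hr.2.2]

end Stmt15Aux

open Stmt15Aux

/-- For `T = 4I` (so `T⁻¹(x+d) = (1/4)•(x+d)`) and
`D = {(0,0)ᵀ, (1,1)ᵀ, (2,2)ᵀ, (3,3)ᵀ, (2,1)ᵀ, (1,2)ᵀ, (0,3)ᵀ, (3,0)ᵀ}`, the attractor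
`F(T,D)` (the unique nonempty compact set with `F = ⋃_{d ∈ D} T⁻¹(F + d)`) is
connected. -/
theorem stmt15
    (D : Finset (Fin 2 → ℤ))
    (hD : D = {![0, 0], ![1, 1], ![2, 2], ![3, 3], ![2, 1], ![1, 2], ![0, 3], ![3, 0]})
    (F : Set (Fin 2 → ℝ)) (hne : F.Nonempty) (hcpt : IsCompact F)
    (hfix : F = ⋃ d ∈ D, (fun x => (4 : ℝ)⁻¹ • (x + castVec d)) '' F) :
    IsConnected F := by
  classical
  -- each piece maps F into F
  have hsub : ∀ d ∈ D, ∀ z ∈ F, fmap d z ∈ F := by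
    intro d hd z hz
    rw [hfix]
    exact Set.mem_biUnion hd ⟨z, hz, rfl⟩
  obtain ⟨x0, hx0⟩ := hne
  -- fixed points of the pieces are in F
  have hfp : ∀ d ∈ D, (3 : ℝ)⁻¹ • castVec d ∈ F := by
    intro d hd
    set p : Fin 2 → ℝ := (3 : ℝ)⁻¹ • castVec d with hp
    have hstep : ∀ z, fmap d z - p = (4 : ℝ)⁻¹ • (z - p) := by
      intro z
      simp only [fmap, hp, smul_add, smul_sub]
      module
    have hdistn : ∀ n : ℕ, dist ((fmap d)^[n] x0) p = ((4:ℝ)⁻¹) ^ n * dist x0 p := by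
      intro n
      induction n with
      | zero => simp
      | succ n ih =>
          rw [Function.iterate_succ_apply', dist_eq_norm, hstep, norm_smul, ← dist_eq_norm, ih]
          simp [pow_succ]
          ring
    have hmem : ∀ n, (fmap d)^[n] x0 ∈ F := by
      intro n
      induction n with
      | zero => simpa
      | succ n ih => rw [Function.iterate_succ_apply']; exact hsub d hd _ ih
    have htend : Filter.Tendsto (fun n => (fmap d)^[n] x0) Filter.atTop (nhds p) := by
      rw [tendsto_iff_dist_tendsto_zero]
      simp only [hdistn]
      have h0 : Filter.Tendsto (fun n : ℕ => ((4:ℝ)⁻¹) ^ n * dist x0 p) Filter.atTop (nhds (0 * dist x0 p)) := by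
        exact (tendsto_pow_atTop_nhds_zero_of_lt_one (by norm_num) (by norm_num)).mul_const _
      simpa using h0
    exact hcpt.isClosed.mem_of_tendsto htend (Filter.Eventually.of_forall hmem)
  -- specific points of F
  have hDmem : ∀ d ∈ ({![0, 0], ![1, 1], ![2, 2], ![3, 3], ![2, 1], ![1, 2], ![0, 3], ![3, 0]} :
      Finset (Fin 2 → ℤ)), d ∈ D := by rw [hD]; intro d hd; exact hd
  have hd00 : (![0,0] : Fin 2 → ℤ) ∈ D := by rw [hD]; decide
  have hd11 : (![1,1] : Fin 2 → ℤ) ∈ D := by rw [hD]; decide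
  have hd22 : (![2,2] : Fin 2 → ℤ) ∈ D := by rw [hD]; decide
  have hd33 : (![3,3] : Fin 2 → ℤ) ∈ D := by rw [hD]; decide
  have hd21 : (![2,1] : Fin 2 → ℤ) ∈ D := by rw [hD]; decide
  have hd12 : (![1,2] : Fin 2 → ℤ) ∈ D := by rw [hD]; decide
  have hd03 : (![0,3] : Fin 2 → ℤ) ∈ D := by rw [hD]; decide
  have hd30 : (![3,0] : Fin 2 → ℤ) ∈ D := by rw [hD]; decide
  have h00 : castVec ![0,0] ∈ F := by
    have := hfp _ hd00
    convert this using 1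
    funext i; fin_cases i <;> simp [castVec]
  have h11 : castVec ![1,1] ∈ F := by
    have := hfp _ hd33
    convert this using 1
    funext i; fin_cases i <;> norm_num [castVec]
  have h10 : castVec ![1,0] ∈ F := by
    have := hfp _ hd30
    convert this using 1
    funext i; fin_cases i <;> norm_num [castVec]
  have h01 : castVec ![0,1] ∈ F := by
    have := hfp _ hd03
    convert this using 1
    funext i; fin_cases i <;> norm_num [castVec]
  -- a bound on diameters
  obtain ⟨M, hM⟩ := Metric.isBounded_iff.1 hcpt.isBounded
  have hM0 : 0 ≤ M := le_trans dist_nonneg (hM hx0 hx0)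
  -- the hub point
  set hub : Fin 2 → ℝ := fmap ![1,1] (castVec ![0,0]) with hhub
  have hhubF : hub ∈ F := hsub _ hd11 _ h00
  -- key equalities between shared points
  have e00 : fmap ![0,0] (castVec ![1,1]) = hub := by
    funext i; fin_cases i <;> norm_num [fmap, castVec, hhub]
  have e22 : fmap ![2,2] (castVec ![0,0]) = fmap ![1,1] (castVec ![1,1]) := by
    funext i; fin_cases i <;> norm_num [fmap, castVec]
  have e33 : fmap ![3,3] (castVec ![0,0]) = fmap ![2,2] (castVec ![1,1]) := by
    funext i; fin_cases i <;> norm_num [fmap, castVec]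
  have e21 : fmap ![2,1] (castVec ![0,0]) = fmap ![1,1] (castVec ![1,0]) := by
    funext i; fin_cases i <;> norm_num [fmap, castVec]
  have e12 : fmap ![1,2] (castVec ![0,0]) = fmap ![1,1] (castVec ![0,1]) := by
    funext i; fin_cases i <;> norm_num [fmap, castVec]
  have e03 : fmap ![0,3] (castVec ![1,0]) = fmap ![1,2] (castVec ![0,1]) := by
    funext i; fin_cases i <;> norm_num [fmap, castVec]
  have e30 : fmap ![3,0] (castVec ![0,1]) = fmap ![2,1] (castVec ![1,0]) := by
    funext i; fin_cases i <;> norm_num [fmap, castVec]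
  -- key chain lemma
  have key : ∀ n : ℕ, ∀ x ∈ F, ChainF F (M * ((4:ℝ)⁻¹) ^ n) x hub := by
    intro n
    induction n with
    | zero =>
        intro x hx
        exact Relation.ReflTransGen.single ⟨hx, hhubF, by simpa using hM hx hhubF⟩
    | succ n ih =>
        intro x hx
        set εn := M * ((4:ℝ)⁻¹) ^ n with hεn
        have hεeq : (4:ℝ)⁻¹ * εn = M * ((4:ℝ)⁻¹) ^ (n+1) := by rw [hεn]; ring
        -- chains between arbitrary points at scale εn
        have pair : ∀ a ∈ F, ∀ b ∈ F, ChainF F εn a b := fun a ha b hb =>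
          (ih a ha).trans (chainF_symm (ih b hb))
        -- within-piece chains at the next scale
        have step : ∀ d ∈ D, ∀ a ∈ F, ∀ b ∈ F,
            ChainF F (M * ((4:ℝ)⁻¹) ^ (n+1)) (fmap d a) (fmap d b) := by
          intro d hd a ha b hb
          have := chainF_map (hsub d hd) (pair a ha b hb)
          rwa [hεeq] at this
        -- decompose x
        rw [hfix] at hx
        -- get the digit
        simp only [Set.mem_iUnion, Set.mem_image] at hx
        obtain ⟨d, hd, x', hx'F, hxe⟩ := hx
        have hxe' : fmap d x' = x := hxe
        rw [hD] at hd
        have hmem8 : d = ![0,0] ∨ d = ![1,1] ∨ d = ![2,2] ∨ d = ![3,3] ∨ d = ![2,1] ∨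
            d = ![1,2] ∨ d = ![0,3] ∨ d = ![3,0] := by
          simpa [Finset.mem_insert] using hd
        subst hxe'
        rcases hmem8 with rfl | rfl | rfl | rfl | rfl | rfl | rfl | rfl
        · exact (step _ hd00 x' hx'F _ h11).trans (e00 ▸ Relation.ReflTransGen.refl)
        · exact step _ hd11 x' hx'F _ h00
        · refine (step _ hd22 x' hx'F _ h00).trans ?_
          rw [e22]
          exact step _ hd11 _ h11 _ h00
        · refine (step _ hd33 x' hx'F _ h00).trans ?_
          rw [e33]
          refine (step _ hd22 _ h11 _ h00).trans ?_
          rw [e22]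
          exact step _ hd11 _ h11 _ h00
        · refine (step _ hd21 x' hx'F _ h00).trans ?_
          rw [e21]
          exact step _ hd11 _ h10 _ h00
        · refine (step _ hd12 x' hx'F _ h00).trans ?_
          rw [e12]
          exact step _ hd11 _ h01 _ h00
        · refine (step _ hd03 x' hx'F _ h10).trans ?_
          rw [e03]
          refine (step _ hd12 _ h01 _ h00).trans ?_
          rw [e12]
          exact step _ hd11 _ h01 _ h00
        · refine (step _ hd30 x' hx'F _ h01).trans ?_
          rw [e30]
          refine (step _ hd21 _ h10 _ h00).trans ?_
          rw [e21]
          exact step _ hd11 _ h10 _ h00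
  -- chains at every positive scale
  have chainAll : ∀ ε > 0, ∀ x ∈ F, ∀ y ∈ F, ChainF F ε x y := by
    intro ε hε x hx y hy
    obtain ⟨n, hn⟩ := exists_pow_lt_of_lt_one (x := ε / (M + 1)) (y := (4:ℝ)⁻¹)
      (by positivity) (by norm_num)
    have hle : M * ((4:ℝ)⁻¹) ^ n ≤ ε := by
      have h1 : M * ((4:ℝ)⁻¹) ^ n ≤ (M + 1) * ((4:ℝ)⁻¹) ^ n := by
        have : (0:ℝ) ≤ ((4:ℝ)⁻¹) ^ n := by positivity
        nlinarith
      have h2 : (M + 1) * ((4:ℝ)⁻¹) ^ n < (M + 1) * (ε / (M + 1)) := by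
        apply mul_lt_mul_of_pos_left hn (by linarith)
      have h3 : (M + 1) * (ε / (M + 1)) = ε := by field_simp
      linarith
    exact chainF_mono hle ((key n x hx).trans (chainF_symm (key n y hy)))
  -- conclude connectedness
  refine ⟨⟨x0, hx0⟩, ?_⟩
  intro u v hu hv hsuv ⟨a, haF, hau⟩ ⟨b, hbF, hbv⟩
  by_contra hemp
  rw [Set.not_nonempty_iff_eq_empty] at hemp
  set A := F ∩ u with hA
  set B := F ∩ v with hB
  have hFAB : F ⊆ A ∪ B := by
    intro z hz
    rcases hsuv hz with h | h
    exacts [Or.inl ⟨hz, h⟩, Or.inr ⟨hz, h⟩]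
  have hABdisj : A ∩ B = ∅ := by
    rw [hA, hB]
    rw [← hemp]
    ext z; constructor
    · rintro ⟨⟨hz1, hz2⟩, _, hz3⟩; exact ⟨hz1, hz2, hz3⟩
    · rintro ⟨hz1, hz2, hz3⟩; exact ⟨⟨hz1, hz2⟩, hz1, hz3⟩
  have hAeq : A = F \ v := by
    apply Set.Subset.antisymm
    · rintro z ⟨hzF, hzu⟩
      refine ⟨hzF, fun hzv => ?_⟩
      have hzmem : z ∈ F ∩ (u ∩ v) := ⟨hzF, hzu, hzv⟩
      rw [hemp] at hzmem
      exact hzmem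
    · rintro z ⟨hzF, hzv⟩
      rcases hsuv hzF with h | h
      exacts [⟨hzF, h⟩, absurd h hzv]
  have hBeq : B = F \ u := by
    apply Set.Subset.antisymm
    · rintro z ⟨hzF, hzv⟩
      refine ⟨hzF, fun hzu => ?_⟩
      have hzmem : z ∈ F ∩ (u ∩ v) := ⟨hzF, hzu, hzv⟩
      rw [hemp] at hzmem
      exact hzmem
    · rintro z ⟨hzF, hzu⟩
      rcases hsuv hzF with h | h
      exacts [absurd h hzu, ⟨hzF, h⟩]
  have hAclosed : IsClosed A := by
    rw [hAeq, Set.diff_eq]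
    exact hcpt.isClosed.inter hv.isClosed_compl
  have hBclosed : IsClosed B := by
    rw [hBeq, Set.diff_eq]
    exact hcpt.isClosed.inter hu.isClosed_compl
  have hAcpt : IsCompact A := hcpt.of_isClosed_subset hAclosed Set.inter_subset_left
  -- positive separation
  have hBne : B.Nonempty := ⟨b, hbF, hbv⟩
  obtain ⟨a0, ha0A, ha0min⟩ := hAcpt.exists_isMinOn ⟨a, haF, hau⟩
    ((Metric.continuous_infDist_pt B).continuousOn)
  set δ := Metric.infDist a0 B with hδ
  have hδpos : 0 < δ := by
    rw [hδ, ← hBclosed.notMem_iff_infDist_pos hBne]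
    intro ha0B
    have : a0 ∈ A ∩ B := ⟨ha0A, ha0B⟩
    rw [hABdisj] at this
    exact this
  -- every point chained to a at scale δ/2 stays in A
  have hchain := chainAll (δ/2) (by linarith) a haF b hbF
  have hstayA : ∀ c, ChainF F (δ/2) a c → c ∈ A := by
    intro c hc
    induction hc with
    | refl => exact ⟨haF, hau⟩
    | tail hpre hr ih =>
        rename_i p q
        rcases hFAB hr.2.1 with h | h
        · exact h
        · exfalso
          have h1 : δ ≤ Metric.infDist p B := ha0min ih
          have h2 : Metric.infDist p B ≤ dist p q := Metric.infDist_le_dist_of_mem h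
          have h3 := hr.2.2
          linarith
  have : b ∈ A ∩ B := ⟨hstayA b hchain, hbF, hbv⟩
  rw [hABdisj] at this
  exact this
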